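/- Let A be a unital separable amenable C*-algebra and B a unital C*-algebra. Suppose (φₙ) is a sequence of contractive completely positive maps from A to B with ‖φₙ(ab) − φₙ(a)φₙ(b)‖ → 0 for all a, b ∈ A. Then there exists a map T : A₊ \ {0} → ℕ × ℝ₊ such that (φₙ) is a T-full asymptotic embedding if and only if the induced *-homomorphism π ∘ (φₙ) : A → ℓ^∞({B})/c₀({B}) is full (i.e., for every nonzero a, the image π∘(φₙ)(a) generates the whole algebra as a closed two-sided ideal). -/

import Mathlib

/-!
STATEMENT 8: For an asymptotically multiplicative sequence of contractive completely
positive maps `φₙ : A → B` (with `A` unital separable amenable), there exists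
`T : A₊\{0} → ℕ × ℝ₊` making `(φₙ)` a `T`-full asymptotic embedding if and only if
the induced *-homomorphism `π ∘ (φₙ) : A → ℓ^∞(B)/c₀(B)` is full.  Fullness of the
induced map is expressed concretely: for every `a ≠ 0`, the identity of the quotient
lies in the closed two-sided ideal generated by the image, i.e. there are uniformly
bounded families `xₙᵢ, yₙᵢ ∈ B` with `‖Σᵢ xₙᵢ · φₙ(a) · yₙᵢ − 1‖ → 0`.
-/

open Filter Topology
open scoped Matrix.Norms.L2Operator BigOperators

noncomputable instance (n : ℕ) : CStarAlgebra (Matrix (Fin n) (Fin n) ℂ) :=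
  { Matrix.instL2OpNormedRing, Matrix.instCStarRing, Matrix.instL2OpNormedAlgebra with
    star_mul := fun a b => star_mul a b
    star_add := fun a b => star_add a b
    complete := CompleteSpace.complete
    star_smul := fun r a => star_smul r a }

/-- Complete positivity of a linear map between C*-algebras. -/
def IsCompletelyPositive {A B : Type*} [CStarAlgebra A] [CStarAlgebra B] (φ : A →ₗ[ℂ] B) : Prop :=
  ∀ (n : ℕ) (a : Matrix (Fin n) (Fin n) A), (∃ b : Matrix (Fin n) (Fin n) A, a = star b * b) →
    ∃ c : Matrix (Fin n) (Fin n) B, a.map φ = star c * c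

/-- Amenability (nuclearity), via the completely positive approximation property. -/
def IsNuclear (A : Type*) [CStarAlgebra A] : Prop :=
  ∀ (F : Finset A) (ε : ℝ), 0 < ε →
    ∃ (n : ℕ) (φ : A →ₗ[ℂ] Matrix (Fin n) (Fin n) ℂ) (ψ : Matrix (Fin n) (Fin n) ℂ →ₗ[ℂ] A),
      IsCompletelyPositive φ ∧ IsCompletelyPositive ψ ∧
      (∀ a, ‖φ a‖ ≤ ‖a‖) ∧ (∀ m, ‖ψ m‖ ≤ ‖m‖) ∧ ∀ a ∈ F, ‖ψ (φ a) - a‖ < ε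

/-- `(φₙ)` is a `T`-full (asymptotic) family: on each finite set `G` of nonzero
positive elements, eventually each `φₙ` is `T`-`G`-full. -/
def TFullFamily {A B : Type*} [CStarAlgebra A] [CStarAlgebra B]
    (T : A → ℕ × ℝ) (φ : ℕ → A →ₗ[ℂ] B) : Prop :=
  ∀ G : Finset A, (∀ a ∈ G, (∃ b : A, a = star b * b) ∧ a ≠ 0) →
    ∃ N : ℕ, ∀ n ≥ N, ∀ a ∈ G, ∃ x : Fin (T a).1 → B,
      (∀ i, ‖x i‖ ≤ (T a).2) ∧ (∑ i, star (x i) * φ n a * x i) = 1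

/-- Fullness of the induced homomorphism `A → ℓ^∞(B)/c₀(B)`. -/
def InducedMapFull {A B : Type*} [CStarAlgebra A] [CStarAlgebra B]
    (φ : ℕ → A →ₗ[ℂ] B) : Prop :=
  ∀ a : A, a ≠ 0 →
    ∃ (N : ℕ) (R : ℝ) (x y : ℕ → Fin N → B),
      (∀ n i, ‖x n i‖ ≤ R) ∧ (∀ n i, ‖y n i‖ ≤ R) ∧
      Tendsto (fun n => ‖(∑ i, x n i * φ n a * y n i) - 1‖) atTop (nhds 0)

lemma key_full {B : Type*} [CStarAlgebra B] {b : B} (hbp : ∃ c : B, b = star c * c) {N : ℕ}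
    (x y : Fin N → B) {R : ℝ} (hx : ∀ i, ‖x i‖ ≤ R) (hy : ∀ i, ‖y i‖ ≤ R)
    (h : ‖(∑ i, x i * b * y i) - 1‖ ≤ 1/4) :
    ∃ u : Fin N → B, (∀ i, ‖u i‖ ≤ 2 * R) ∧ (∑ i, star (u i) * b * u i) = 1 := by
  letI : PartialOrder B := CStarAlgebra.spectralOrder B
  letI : StarOrderedRing B := CStarAlgebra.spectralOrderedRing B
  obtain ⟨cb, rfl⟩ := hbp
  set b := star cb * cb with hbdef
  have hb : 0 ≤ b := star_mul_self_nonneg cb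
  have hbsa : IsSelfAdjoint b := .of_nonneg hb
  have halg : ∀ u : ℝ, 0 ≤ u → 0 ≤ algebraMap ℝ B u := by
    intro u hu
    have hsa : IsSelfAdjoint (algebraMap ℝ B (Real.sqrt u)) :=
      (IsSelfAdjoint.all _).algebraMap B
    have : algebraMap ℝ B u
        = star (algebraMap ℝ B (Real.sqrt u)) * algebraMap ℝ B (Real.sqrt u) := by
      rw [hsa.star_eq, ← map_mul, Real.mul_self_sqrt hu]
    rw [this]
    exact star_mul_self_nonneg _
  have halg_mono : ∀ u v : ℝ, u ≤ v → algebraMap ℝ B u ≤ algebraMap ℝ B v := by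
    intro u v huv
    rw [← sub_nonneg, ← map_sub]
    exact halg _ (by linarith)
  set t := ∑ i, x i * b * y i with ht
  set w : Fin N → B := fun i => y i + star (x i) with hw
  set v : Fin N → B := fun i => y i - star (x i) with hv
  set S : B := ∑ i, star (w i) * b * w i with hS
  set S' : B := ∑ i, star (v i) * b * v i with hS'
  have hS_nonneg : 0 ≤ S := Finset.sum_nonneg fun i _ => star_left_conjugate_nonneg hb _
  have hS'_nonneg : 0 ≤ S' := Finset.sum_nonneg fun i _ => star_left_conjugate_nonneg hb _
  have hSsa : IsSelfAdjoint S := .of_nonneg hS_nonneg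
  have hkey : S - S' = 2 • (t + star t) := by
    have hstar_t : star t = ∑ i, star (y i) * b * star (x i) := by
      rw [ht, star_sum]
      refine Finset.sum_congr rfl fun i _ => ?_
      simp [star_mul, hbsa.star_eq, mul_assoc]
    rw [hS, hS', ← Finset.sum_sub_distrib, two_smul, hstar_t, ht]
    rw [← Finset.sum_add_distrib, ← Finset.sum_add_distrib]
    refine Finset.sum_congr rfl fun i _ => ?_
    simp only [hw, hv, star_add, star_sub, star_star]
    noncomm_ring
  have hd : ‖(1 - t) + (1 - star t)‖ ≤ 1/2 := by
    have h1 : ‖(1:B) - star t‖ = ‖t - 1‖ := by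
      rw [norm_sub_rev, show star t - 1 = star (t - 1) by simp [star_sub], norm_star]
    calc ‖(1 - t) + (1 - star t)‖ ≤ ‖1 - t‖ + ‖1 - star t‖ := norm_add_le _ _
      _ = ‖t - 1‖ + ‖t - 1‖ := by rw [norm_sub_rev, h1]
      _ ≤ 1/2 := by linarith
  have hdsa : IsSelfAdjoint ((1 - t) + (1 - star t)) := by
    refine isSelfAdjoint_iff.mpr ?_
    simp only [star_add, star_sub, star_one, star_star]
    abel
  have hle : (1 - t) + (1 - star t) ≤ algebraMap ℝ B (1/2) :=
    hdsa.le_algebraMap_norm_self.trans (halg_mono _ _ hd)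
  have h2B : algebraMap ℝ B 2 = 1 + 1 := by
    rw [show (2:ℝ) = 1 + 1 by norm_num, map_add, map_one]
  have h32 : algebraMap ℝ B (3/2) ≤ t + star t := by
    have e1 : algebraMap ℝ B (3/2) = algebraMap ℝ B 2 - algebraMap ℝ B (1/2) := by
      rw [← map_sub]; norm_num
    have e2 : (1:B) - t + (1 - star t) = algebraMap ℝ B 2 - (t + star t) := by
      rw [h2B]; abel
    rw [e2] at hle
    rw [e1]
    exact sub_le_comm.mp hle
  have h3S : algebraMap ℝ B 3 ≤ S := by
    have hsub : S - 2 • (t + star t) = S' := by rw [← hkey]; abel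
    have h1 : 2 • (t + star t) ≤ S :=
      sub_nonneg.mp (by rw [hsub]; exact hS'_nonneg)
    calc algebraMap ℝ B 3 = algebraMap ℝ B (3/2) + algebraMap ℝ B (3/2) := by
          rw [← map_add]; norm_num
      _ ≤ (t + star t) + (t + star t) := add_le_add h32 h32
      _ = 2 • (t + star t) := (two_smul ℕ _).symm
      _ ≤ S := h1
  have hspec : spectrum ℝ S ⊆ Set.Ici 3 :=
    fun r hr => (algebraMap_le_iff_le_spectrum hSsa).mp h3S r hr
  set f : ℝ → ℝ := fun r => (Real.sqrt r)⁻¹ with hf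
  have hfc : ContinuousOn f (spectrum ℝ S) := by
    apply ContinuousOn.inv₀ (Real.continuous_sqrt.continuousOn)
    intro r hr
    have h3r : (3:ℝ) ≤ r := hspec hr
    positivity
  set c : B := cfc f S with hc
  have hcsa : IsSelfAdjoint c := cfc_predicate f S
  have hmain : c * S * c = 1 := by
    have e1 : cfc (fun r : ℝ => f r * (r * f r)) S = cfc f S * cfc (fun r : ℝ => r * f r) S :=
      cfc_mul _ _ S hfc (continuousOn_id.mul hfc)
    have e2 : cfc (fun r : ℝ => r * f r) S = cfc (id : ℝ → ℝ) S * cfc f S :=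
      cfc_mul _ _ S continuousOn_id hfc
    calc c * S * c = cfc f S * (cfc (id : ℝ → ℝ) S * cfc f S) := by
          rw [cfc_id ℝ S hSsa, hc, mul_assoc]
      _ = cfc (fun r : ℝ => f r * (r * f r)) S := by rw [e1, e2]
      _ = cfc (fun _ : ℝ => (1:ℝ)) S := by
          apply cfc_congr
          intro r hr
          have h3r : (3:ℝ) ≤ r := hspec hr
          have hsq : Real.sqrt r * Real.sqrt r = r := Real.mul_self_sqrt (by linarith)
          have hsqne : Real.sqrt r ≠ 0 := by positivity
          simp only [hf]
          field_simp
          rw [sq, hsq]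
      _ = 1 := cfc_const_one ℝ S hSsa
  have hcnorm : ‖c‖ ≤ 1 := by
    rw [hc]
    refine norm_cfc_le zero_le_one fun r hr => ?_
    have h3r : (3:ℝ) ≤ r := hspec hr
    have h1r : (1:ℝ) ≤ Real.sqrt r := by
      rw [show (1:ℝ) = Real.sqrt 1 from (Real.sqrt_one).symm]
      exact Real.sqrt_le_sqrt (by linarith)
    simp only [hf, Real.norm_eq_abs, abs_inv, abs_of_nonneg (Real.sqrt_nonneg r)]
    rw [inv_le_one_iff₀]
    right; exact h1r
  refine ⟨fun i => w i * c, fun i => ?_, ?_⟩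
  · calc ‖w i * c‖ ≤ ‖w i‖ * ‖c‖ := norm_mul_le _ _
      _ ≤ ‖w i‖ * 1 := by
          have h0 : (0:ℝ) ≤ ‖w i‖ := norm_nonneg _
          nlinarith
      _ = ‖w i‖ := mul_one _
      _ ≤ ‖y i‖ + ‖x i‖ := by
          rw [hw]
          exact (norm_add_le _ _).trans (by rw [norm_star])
      _ ≤ 2 * R := by linarith [hx i, hy i]
  · calc ∑ i, star (w i * c) * b * (w i * c)
        = ∑ i, star c * (star (w i) * b * w i) * c := by
          refine Finset.sum_congr rfl fun i _ => ?_
          simp [star_mul, mul_assoc]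
      _ = star c * S * c := by
          rw [hS, Finset.mul_sum, Finset.sum_mul]
      _ = c * S * c := by rw [hcsa.star_eq]
      _ = 1 := hmain

lemma cp_image_pos {A B : Type*} [CStarAlgebra A] [CStarAlgebra B] {φ : A →ₗ[ℂ] B}
    (hcp : IsCompletelyPositive φ) {a : A} (ha : ∃ b : A, a = star b * b) :
    ∃ c : B, φ a = star c * c := by
  obtain ⟨b, rfl⟩ := ha
  obtain ⟨c, hc⟩ := hcp 1 (Matrix.of fun _ _ => star b * b) ⟨Matrix.of fun _ _ => b, by
    ext i j
    simp [Matrix.mul_apply, Matrix.star_apply, Fin.sum_univ_one]⟩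
  refine ⟨c 0 0, ?_⟩
  have h00 : ((Matrix.of fun _ _ => star b * b).map φ) 0 0 = (star c * c) 0 0 :=
    congrFun (congrFun hc 0) 0
  simpa [Matrix.map_apply, Matrix.mul_apply, Matrix.star_apply, Fin.sum_univ_one] using h00

theorem tfull_iff_induced_full {A B : Type*} [CStarAlgebra A] [CStarAlgebra B]
    [TopologicalSpace.SeparableSpace A] (hnuc : IsNuclear A)
    (φ : ℕ → A →ₗ[ℂ] B)
    (hcp : ∀ n, IsCompletelyPositive (φ n)) (hcontr : ∀ n (a : A), ‖φ n a‖ ≤ ‖a‖)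
    (hmult : ∀ a b : A, Tendsto (fun n => ‖φ n (a * b) - φ n a * φ n b‖) atTop (nhds 0)) :
    (∃ T : A → ℕ × ℝ, TFullFamily T φ) ↔ InducedMapFull φ := by
  constructor
  · rintro ⟨T, hT⟩ a ha
    have ha' : (star a * a : A) ≠ 0 := fun h => ha ((CStarRing.star_mul_self_eq_zero_iff a).mp h)
    obtain ⟨N₀, hN₀⟩ := hT {star a * a} (by
      intro b hb
      rw [Finset.mem_singleton] at hb
      subst hb
      exact ⟨⟨a, rfl⟩, ha'⟩)
    classical
    set X : ℕ → Fin (T (star a * a)).1 → B := fun n =>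
      if h : N₀ ≤ n then (hN₀ n h (star a * a) (Finset.mem_singleton_self _)).choose else 0
      with hX
    have hX1 : ∀ n (h : N₀ ≤ n) (i : Fin (T (star a * a)).1), ‖X n i‖ ≤ (T (star a * a)).2 := by
      intro n h i
      simp only [hX, dif_pos h]
      exact (hN₀ n h _ (Finset.mem_singleton_self _)).choose_spec.1 i
    have hX2 : ∀ n, N₀ ≤ n → ∑ i, star (X n i) * φ n (star a * a) * X n i = 1 := by
      intro n h
      simp only [hX, dif_pos h]
      exact (hN₀ n h _ (Finset.mem_singleton_self _)).choose_spec.2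
    set M := max (T (star a * a)).2 0 with hM
    have hM0 : 0 ≤ M := le_max_right _ _
    have hXb : ∀ n i, ‖X n i‖ ≤ M := by
      intro n i
      by_cases h : N₀ ≤ n
      · exact (hX1 n h i).trans (le_max_left _ _)
      · simp [hX, dif_neg h, hM0]
    refine ⟨(T (star a * a)).1, M * (1 + ‖a‖),
      fun n i => star (X n i) * φ n (star a), fun n => X n, ?_, ?_, ?_⟩
    · intro n i
      calc ‖star (X n i) * φ n (star a)‖ ≤ ‖star (X n i)‖ * ‖φ n (star a)‖ := norm_mul_le _ _
        _ = ‖X n i‖ * ‖φ n (star a)‖ := by rw [norm_star]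
        _ ≤ M * (1 + ‖a‖) := by
            refine mul_le_mul (hXb n i) ((hcontr n (star a)).trans ?_) (norm_nonneg _) hM0
            rw [norm_star]
            linarith [norm_nonneg a]
    · intro n i
      refine (hXb n i).trans ?_
      refine le_mul_of_one_le_right hM0 ?_
      linarith [norm_nonneg a]
    · have hdiff : ∀ n, N₀ ≤ n →
          ‖(∑ i, (star (X n i) * φ n (star a)) * φ n a * X n i) - 1‖
            ≤ ((T (star a * a)).1 : ℝ) * (M * M)
              * ‖φ n (star a * a) - φ n (star a) * φ n a‖ := by
        intro n h
        have e : (∑ i, (star (X n i) * φ n (star a)) * φ n a * X n i) - 1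
            = ∑ i, star (X n i) * (φ n (star a) * φ n a - φ n (star a * a)) * X n i := by
          rw [← hX2 n h, ← Finset.sum_sub_distrib]
          refine Finset.sum_congr rfl fun i _ => ?_
          noncomm_ring
        rw [e]
        set D := φ n (star a) * φ n a - φ n (star a * a) with hD
        have hDnorm : ‖D‖ = ‖φ n (star a * a) - φ n (star a) * φ n a‖ := norm_sub_rev _ _
        calc ‖∑ i, star (X n i) * D * X n i‖
            ≤ ∑ i, ‖star (X n i) * D * X n i‖ := norm_sum_le _ _
          _ ≤ ∑ _i : Fin (T (star a * a)).1, M * ‖D‖ * M := by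
              refine Finset.sum_le_sum fun i _ => ?_
              calc ‖star (X n i) * D * X n i‖
                  ≤ ‖star (X n i) * D‖ * ‖X n i‖ := norm_mul_le _ _
                _ ≤ ‖star (X n i)‖ * ‖D‖ * ‖X n i‖ :=
                    mul_le_mul_of_nonneg_right (norm_mul_le _ _) (norm_nonneg _)
                _ = ‖X n i‖ * ‖D‖ * ‖X n i‖ := by rw [norm_star]
                _ ≤ M * ‖D‖ * M := by
                    have h1 := hXb n i
                    have h2 : (0:ℝ) ≤ ‖D‖ := norm_nonneg _
                    have h3 : (0:ℝ) ≤ ‖X n i‖ := norm_nonneg _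
                    exact mul_le_mul (mul_le_mul h1 le_rfl h2 hM0) h1 h3
                      (mul_nonneg hM0 h2)
          _ = ((T (star a * a)).1 : ℝ) * (M * M) * ‖D‖ := by
              rw [Finset.sum_const, Finset.card_univ, Fintype.card_fin, nsmul_eq_mul]
              ring
          _ = ((T (star a * a)).1 : ℝ) * (M * M)
              * ‖φ n (star a * a) - φ n (star a) * φ n a‖ := by rw [hDnorm]
      have h0 : Tendsto (fun n => ((T (star a * a)).1 : ℝ) * (M * M)
          * ‖φ n (star a * a) - φ n (star a) * φ n a‖) atTop (nhds 0) := by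
        have := (hmult (star a) a).const_mul (((T (star a * a)).1 : ℝ) * (M * M))
        simpa using this
      refine squeeze_zero' (Eventually.of_forall fun n => norm_nonneg _) ?_ h0
      filter_upwards [eventually_ge_atTop N₀] with n hn
      exact hdiff n hn
  · intro hfull
    classical
    choose Nf Rf xf yf hxf hyf htend using hfull
    refine ⟨fun a => if h : a ≠ 0 then (Nf a h, 2 * Rf a h) else (0, 0), ?_⟩
    intro G hG
    have hev : ∀ᶠ n in atTop, ∀ a ∈ G, ∀ (ha : a ≠ 0),
        ‖(∑ i, xf a ha n i * φ n a * yf a ha n i) - 1‖ ≤ 1/4 := by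
      rw [eventually_all_finset]
      intro a haG
      have ha : a ≠ 0 := (hG a haG).2
      have := (htend a ha).eventually (eventually_le_nhds (by norm_num : (0:ℝ) < 1/4))
      filter_upwards [this] with n hn ha'
      exact hn
    obtain ⟨N, hN⟩ := eventually_atTop.mp hev
    refine ⟨N, fun n hn a haG => ?_⟩
    obtain ⟨hpa, ha⟩ := hG a haG
    have hb : ∃ c : B, φ n a = star c * c := cp_image_pos (hcp n) hpa
    obtain ⟨u, hu1, hu2⟩ := key_full hb (xf a ha n) (yf a ha n)
        (fun i => hxf a ha n i) (fun i => hyf a ha n i) (hN n hn a haG ha)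
    have hTa : (if h : a ≠ 0 then (Nf a h, 2 * Rf a h) else ((0 : ℕ), (0 : ℝ))) =
        (Nf a ha, 2 * Rf a ha) := dif_pos ha
    beta_reduce
    rw [hTa]
    exact ⟨u, hu1, hu2⟩
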